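/- arXiv:1408.3498 — 4 statements merged into one kernel-verified Lean document; each statement's English description precedes it below -/
import Mathlib

section
/- For any d ∈ ℕ with d ≥ 2 and any m ∈ ℕ₀, the sum over all k ∈ ℕ₀^d with |k|₁ ≤ m of 2^(|k|₁) satisfies ((m+d−1)/(d−1))^(d−1) · 2^m ≤ Σ_{|k|₁ ≤ m} 2^(|k|₁) ≤ (e(m+d−1)/(d−1))^(d−1) · 2^(m+1). -/
open Finset

lemma aux_pow_le_choose_mul (n N : ℕ) (h : n ≤ N) : N ^ n ≤ N.choose n * n ^ n := by
  have hfac : N ^ n * n.factorial ≤ (N.choose n * n ^ n) * n.factorial := by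
    have hfact : n.factorial = ∏ i ∈ range n, (n - i) := by
      rw [← Finset.prod_range_add_one_eq_factorial, ← Finset.prod_range_reflect]
      refine Finset.prod_congr rfl fun i hi => ?_
      rw [Finset.mem_range] at hi
      omega
    calc N ^ n * n.factorial = ∏ i ∈ range n, (N * (n - i)) := by
          rw [Finset.prod_mul_distrib, Finset.prod_const, ← hfact, Finset.card_range]
      _ ≤ ∏ i ∈ range n, ((N - i) * n) := by
          refine Finset.prod_le_prod' fun i hi => ?_
          rw [Finset.mem_range] at hi
          rw [Nat.mul_sub, Nat.sub_mul]
          exact Nat.sub_le_sub_left (by nlinarith) _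
      _ = N.descFactorial n * n ^ n := by
          rw [Finset.prod_mul_distrib, Finset.prod_const, Nat.descFactorial_eq_prod_range,
            Finset.card_range]
      _ = (N.choose n * n ^ n) * n.factorial := by
          rw [Nat.descFactorial_eq_factorial_mul_choose]; ring
  exact Nat.le_of_mul_le_mul_right hfac n.factorial_pos

lemma aux_lower (n N : ℕ) (hn : 0 < n) (h : n ≤ N) : ((N : ℝ) / n) ^ n ≤ N.choose n := by
  have hn' : (0:ℝ) < (n:ℝ) ^ n := by positivity
  rw [div_pow, div_le_iff₀ hn']
  exact_mod_cast aux_pow_le_choose_mul n N h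

lemma aux_upper (n N : ℕ) (hn : 0 < n) :
    (N.choose n : ℝ) ≤ (Real.exp 1 * N / n) ^ n := by
  have hfac : (0:ℝ) < (n.factorial : ℝ) := by exact_mod_cast n.factorial_pos
  have hnn : (0:ℝ) < (n:ℝ) ^ n := by positivity
  have h1 : (N.choose n : ℝ) ≤ (N:ℝ) ^ n / n.factorial := by
    exact_mod_cast Nat.choose_le_pow_div n N
  have h2 : ((n:ℝ)) ^ n / n.factorial ≤ Real.exp n :=
    Real.pow_div_factorial_le_exp (x := (n:ℝ)) (by positivity) n
  have h3 : ((n:ℝ)) ^ n ≤ Real.exp n * n.factorial := by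
    rw [div_le_iff₀ hfac] at h2; exact h2
  refine h1.trans ?_
  have : (Real.exp 1 * N / n) ^ n = Real.exp n * (N:ℝ) ^ n / (n:ℝ) ^ n := by
    rw [div_pow, mul_pow, ← Real.exp_one_pow]
  rw [this, div_le_div_iff₀ hfac hnn]
  nlinarith [pow_nonneg (Nat.cast_nonneg (α := ℝ) N) n, Real.exp_pos (n:ℝ)]

lemma aux_card (d j : ℕ) :
    (Finset.piAntidiag (Finset.univ : Finset (Fin d)) j).card = (d + j - 1).choose j := by
  classical
  rw [← Finset.map_sym_eq_piAntidiag, Finset.card_map, Finset.sym_univ, Finset.card_univ,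
    Sym.card_sym_eq_choose]
  simp

/-- two-sided bound for `∑_{|k|₁ ≤ m} 2^{|k|₁}`. -/
theorem stmt2 (d : ℕ) (hd : 2 ≤ d) (m : ℕ) :
    (((m : ℝ) + d - 1) / ((d : ℝ) - 1)) ^ (d - 1) * 2 ^ m
        ≤ (∑' k : Fin d → ℕ, if (∑ i, k i) ≤ m then (2:ℝ) ^ (∑ i, k i) else 0) ∧
      (∑' k : Fin d → ℕ, if (∑ i, k i) ≤ m then (2:ℝ) ^ (∑ i, k i) else 0)
        ≤ (Real.exp 1 * ((m : ℝ) + d - 1) / ((d : ℝ) - 1)) ^ (d - 1) * 2 ^ (m + 1) := by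
  classical
  set n := d - 1 with hn
  have hn1 : 1 ≤ n := by omega
  have hdn : d = n + 1 := by omega
  have hcastd : (d : ℝ) = (n : ℝ) + 1 := by rw [hdn]; push_cast; ring
  set S : Finset (Fin d → ℕ) :=
    (Finset.range (m+1)).biUnion (fun j => Finset.piAntidiag Finset.univ j) with hS
  have hmem : ∀ k : Fin d → ℕ, k ∈ S ↔ (∑ i, k i) ≤ m := by
    intro k
    simp only [hS, Finset.mem_biUnion, Finset.mem_range, Finset.mem_piAntidiag,
      Finset.mem_univ, ne_eq, implies_true, and_true, Nat.lt_succ_iff]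
    constructor
    · rintro ⟨j, hj, rfl⟩; exact hj
    · intro h; exact ⟨_, h, rfl⟩
  have hkey : (∑' k : Fin d → ℕ, if (∑ i, k i) ≤ m then (2:ℝ) ^ (∑ i, k i) else 0)
      = ∑ j ∈ Finset.range (m+1), ((j + n).choose n : ℝ) * 2 ^ j := by
    rw [tsum_eq_sum (s := S) (f := fun k : Fin d → ℕ =>
      if (∑ i, k i) ≤ m then (2:ℝ) ^ (∑ i, k i) else 0)
      (by intro k hk; exact if_neg fun h => hk ((hmem k).2 h))]
    rw [Finset.sum_biUnion]
    · refine Finset.sum_congr rfl fun j hj => ?_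
      rw [Finset.mem_range, Nat.lt_succ_iff] at hj
      have : ∀ k ∈ Finset.piAntidiag (Finset.univ : Finset (Fin d)) j,
          (if (∑ i, k i) ≤ m then (2:ℝ) ^ (∑ i, k i) else 0) = 2 ^ j := by
        intro k hk
        rw [Finset.mem_piAntidiag] at hk
        rw [hk.1, if_pos hj]
      rw [Finset.sum_congr rfl this, Finset.sum_const, aux_card, nsmul_eq_mul]
      congr 2
      have h1 : d + j - 1 = j + n := by omega
      rw [h1]
      have := Nat.choose_symm (n := j + n) (k := j) (Nat.le_add_right _ _)
      have h2 : j + n - j = n := by omega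
      rw [h2] at this
      exact this.symm
    · intro a ha b hb hab
      simp only [Finset.disjoint_left]
      intro k hka hkb
      rw [Finset.mem_piAntidiag] at hka hkb
      exact hab (hka.1 ▸ hkb.1.symm ▸ rfl)
  have hcastN : ((m : ℝ) + d - 1) = ((m + n : ℕ) : ℝ) := by push_cast [hcastd]; ring
  have hcastn : ((d : ℝ) - 1) = ((n : ℕ) : ℝ) := by rw [hcastd]; ring
  rw [hkey, hcastN, hcastn]
  constructor
  · have hsingle : ((m + n).choose n : ℝ) * 2 ^ m
        ≤ ∑ j ∈ Finset.range (m+1), ((j + n).choose n : ℝ) * 2 ^ j :=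
      Finset.single_le_sum (f := fun j => ((j + n).choose n : ℝ) * 2 ^ j)
        (fun j _ => by positivity) (Finset.mem_range.2 (Nat.lt_succ_self m))
    refine le_trans ?_ hsingle
    have := aux_lower n (m + n) hn1 (Nat.le_add_left _ _)
    exact mul_le_mul_of_nonneg_right this (by positivity)
  · have hmono : ∀ j ∈ Finset.range (m+1),
        ((j + n).choose n : ℝ) * 2 ^ j ≤ ((m + n).choose n : ℝ) * 2 ^ j := by
      intro j hj
      rw [Finset.mem_range, Nat.lt_succ_iff] at hj
      have : (j + n).choose n ≤ (m + n).choose n :=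
        Nat.choose_le_choose n (by omega)
      exact mul_le_mul_of_nonneg_right (by exact_mod_cast this) (by positivity)
    have hgeom : ∑ j ∈ Finset.range (m+1), (2:ℝ) ^ j = 2 ^ (m+1) - 1 := by
      rw [geom_sum_eq (by norm_num)]; norm_num
    calc ∑ j ∈ Finset.range (m+1), ((j + n).choose n : ℝ) * 2 ^ j
        ≤ ∑ j ∈ Finset.range (m+1), ((m + n).choose n : ℝ) * 2 ^ j :=
          Finset.sum_le_sum hmono
      _ = ((m + n).choose n : ℝ) * (2 ^ (m+1) - 1) := by rw [← Finset.mul_sum, hgeom]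
      _ ≤ ((m + n).choose n : ℝ) * 2 ^ (m+1) := by
          have : (0:ℝ) ≤ ((m + n).choose n : ℝ) := by positivity
          nlinarith
      _ ≤ (Real.exp 1 * ((m + n : ℕ) : ℝ) / ((n : ℕ) : ℝ)) ^ n * 2 ^ (m+1) := by
          refine mul_le_mul_of_nonneg_right ?_ (by positivity)
          exact_mod_cast aux_upper n (m + n) hn1
end

section
/- Let α > 0, γ ≥ 0, β < γ, ε with 0 < ε < γ − β < α. Then there is a constant C = C(α, β, γ, ε, d) > 0 such that for all ξ > 0, the sum over all k ∈ ℕ₀^d with (α−ε)|k|₁ − (γ−β−ε)|k|_∞ > ξ of 2^(−2α|k|₁ + 2(γ−β)|k|_∞) is at most C · 2^(−2ξ). -/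
open Finset
open scoped ENNReal NNReal

namespace Stmt5Aux

lemma ofReal_rpow_natmul (x : ℝ) (n : ℕ) :
    ENNReal.ofReal ((2:ℝ) ^ (x * (n:ℝ))) = (ENNReal.ofReal ((2:ℝ) ^ x)) ^ n := by
  rw [← ENNReal.ofReal_pow (Real.rpow_nonneg (by norm_num) x)]
  congr 1
  rw [← Real.rpow_natCast ((2:ℝ) ^ x) n, ← Real.rpow_mul (by norm_num)]

lemma geom_ne_top {x : ℝ} (hx : x < 0) :
    (∑' n : ℕ, (ENNReal.ofReal ((2:ℝ) ^ x)) ^ n) ≠ ⊤ := by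
  rw [ENNReal.tsum_geometric]
  have h1 : ENNReal.ofReal ((2:ℝ) ^ x) < 1 :=
    ENNReal.ofReal_lt_one.mpr (Real.rpow_lt_one_of_one_lt_of_neg (by norm_num) hx)
  rw [ENNReal.inv_ne_top]
  exact (tsub_pos_of_lt h1).ne'

lemma one_le_geom {ρ : ℝ≥0∞} : 1 ≤ ∑' n : ℕ, ρ ^ n := by
  have := ENNReal.le_tsum (f := fun n : ℕ => ρ ^ n) 0
  simpa using this

lemma real_of_ennreal {ι : Type*} {f : ι → ℝ} (hf : ∀ x, 0 ≤ f x) {B : ℝ} (hB : 0 ≤ B)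
    (h : (∑' x, ENNReal.ofReal (f x)) ≤ ENNReal.ofReal B) : ∑' x, f x ≤ B := by
  have h1 : (∑' x, ENNReal.ofReal (f x)) ≠ ⊤ := (lt_of_le_of_lt h ENNReal.ofReal_lt_top).ne
  have h2 : Summable (fun x => (f x).toNNReal) := by
    rw [← ENNReal.tsum_coe_ne_top_iff_summable]
    exact h1
  have h4 : (∑' x, f x) = ((∑' x, (f x).toNNReal : ℝ≥0) : ℝ) := by
    rw [NNReal.coe_tsum]
    exact tsum_congr fun x => (Real.coe_toNNReal _ (hf x)).symm
  rw [h4]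
  have h5 : ((∑' x, (f x).toNNReal : ℝ≥0) : ℝ≥0∞) ≤ ENNReal.ofReal B := by
    rw [ENNReal.coe_tsum h2]; exact h
  have h6 := ENNReal.toReal_mono ENNReal.ofReal_ne_top h5
  simpa [ENNReal.toReal_ofReal hB] using h6

lemma tail_le {c : ℝ} (hc : 0 < c) (t : ℝ) :
    (∑' m : ℕ, if t < c * (m:ℝ) then ENNReal.ofReal ((2:ℝ) ^ (-2 * (c * (m:ℝ) - t))) else 0)
      ≤ ∑' j : ℕ, (ENNReal.ofReal ((2:ℝ) ^ (-2 * c))) ^ j := by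
  set f : ℕ → ℝ≥0∞ :=
    fun m => if t < c * (m:ℝ) then ENNReal.ofReal ((2:ℝ) ^ (-2 * (c * (m:ℝ) - t))) else 0 with hfdef
  by_cases h : ∃ m : ℕ, t < c * (m:ℝ)
  · set m₀ := Nat.find h with hm₀def
    have hm₀ : t < c * (m₀:ℝ) := Nat.find_spec h
    have key : ∑' m, f m = ∑' j : ℕ, f (j + m₀) := by
      refine tsum_eq_tsum_of_ne_zero_bij (fun j => (j.1 + m₀)) ?_ ?_ ?_
      · intro x y hxy
        exact Subtype.ext (Nat.add_right_cancel hxy)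
      · intro m hm
        rcases lt_or_ge m m₀ with hlt | hge
        · exact absurd (by simp [f, Nat.find_min h hlt]) hm
        · refine ⟨⟨m - m₀, ?_⟩, by simp [Nat.sub_add_cancel hge]⟩
          simpa [Function.mem_support, Nat.sub_add_cancel hge] using hm
      · intro x; rfl
    rw [key]
    refine ENNReal.tsum_le_tsum fun j => ?_
    by_cases hj : t < c * (((j + m₀ : ℕ)):ℝ)
    · rw [hfdef]
      simp only [hj, if_pos]
      have hsplit : -2 * (c * (((j + m₀ : ℕ)):ℝ) - t)
          = (-2 * c) * (j:ℝ) + (-2 * (c * (m₀:ℝ) - t)) := by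
        push_cast
        ring
      rw [hsplit, Real.rpow_add two_pos]
      have h2 : (2:ℝ) ^ (-2 * (c * (m₀:ℝ) - t)) ≤ 1 :=
        Real.rpow_le_one_of_one_le_of_nonpos (by norm_num) (by nlinarith)
      calc ENNReal.ofReal ((2:ℝ) ^ ((-2 * c) * (j:ℝ)) * (2:ℝ) ^ (-2 * (c * (m₀:ℝ) - t)))
          ≤ ENNReal.ofReal ((2:ℝ) ^ ((-2 * c) * (j:ℝ))) := by
            refine ENNReal.ofReal_le_ofReal ?_
            have := Real.rpow_nonneg (by norm_num : (0:ℝ) ≤ 2) ((-2 * c) * (j:ℝ))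
            nlinarith
        _ = (ENNReal.ofReal ((2:ℝ) ^ (-2 * c))) ^ j := ofReal_rpow_natmul _ _
    · rw [hfdef]
      simp only [hj, if_neg, not_false_iff]
      exact zero_le
  · push_neg at h
    have hz : ∀ m : ℕ, f m = 0 := fun m => if_neg (not_lt.mpr (h m))
    calc ∑' m, f m = 0 := by simp [hz]
      _ ≤ _ := zero_le

lemma tsum_pi_pow_fin (ρ : ℝ≥0∞) : ∀ n : ℕ,
    (∑' q : Fin n → ℕ, ρ ^ (∑ j, q j)) = (∑' m : ℕ, ρ ^ m) ^ n := by
  intro n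
  induction n with
  | zero =>
    rw [pow_zero]
    have h1 : ∀ q : Fin 0 → ℕ, ρ ^ (∑ j, q j) = 1 := by intro q; simp
    rw [tsum_congr h1]
    exact tsum_eq_single (fun i => i.elim0) (fun b hb => absurd (Subsingleton.elim b _) hb)
  | succ n ih =>
    let e : ℕ × (Fin n → ℕ) ≃ (Fin (n+1) → ℕ) := Fin.consEquiv fun _ => ℕ
    calc (∑' q : Fin (n+1) → ℕ, ρ ^ (∑ j, q j))
        = ∑' p : ℕ × (Fin n → ℕ), ρ ^ (∑ j, (e p) j) := (e.tsum_eq _).symm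
      _ = ∑' p : ℕ × (Fin n → ℕ), ρ ^ p.1 * ρ ^ (∑ j, p.2 j) := by
          refine tsum_congr fun p => ?_
          have hs : (∑ j, (e p) j) = p.1 + ∑ j, p.2 j := by
            show (∑ j, (Fin.cons p.1 p.2 : Fin (n+1) → ℕ) j) = p.1 + ∑ j, p.2 j
            rw [Fin.sum_univ_succ]
            simp
          rw [hs, pow_add]
      _ = (∑' m : ℕ, ρ ^ m) * (∑' q : Fin n → ℕ, ρ ^ (∑ j, q j)) := by
          rw [ENNReal.tsum_prod']
          simp only [ENNReal.tsum_mul_left, ENNReal.tsum_mul_right]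
      _ = (∑' m : ℕ, ρ ^ m) ^ (n + 1) := by rw [ih, pow_succ, mul_comm]

lemma tsum_pi_pow (ρ : ℝ≥0∞) (ι : Type*) [Fintype ι] :
    (∑' q : ι → ℕ, ρ ^ (∑ j, q j)) = (∑' m : ℕ, ρ ^ m) ^ (Fintype.card ι) := by
  let e := Fintype.equivFin ι
  let E : (Fin (Fintype.card ι) → ℕ) ≃ (ι → ℕ) := Equiv.arrowCongr e.symm (Equiv.refl ℕ)
  calc (∑' q : ι → ℕ, ρ ^ (∑ j, q j))
      = ∑' p : Fin (Fintype.card ι) → ℕ, ρ ^ (∑ j, (E p) j) := (E.tsum_eq _).symm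
    _ = ∑' p : Fin (Fintype.card ι) → ℕ, ρ ^ (∑ j, p j) := by
        refine tsum_congr fun p => ?_
        congr 1
        have : ∀ j : ι, (E p) j = p (e j) := fun j => rfl
        rw [Finset.sum_congr rfl fun j _ => this j]
        exact Equiv.sum_comp e p
    _ = (∑' m : ℕ, ρ ^ m) ^ (Fintype.card ι) := tsum_pi_pow_fin ρ _

end Stmt5Aux

open Stmt5Aux

/-- tail sum outside the energy-norm based index set
`Δ_ε(ξ) = {k : (α-ε)|k|₁ - (γ-β-ε)|k|_∞ ≤ ξ}` decays like `2^{-2ξ}`. -/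
theorem stmt5 (d : ℕ) (α γ β ε : ℝ) (hα : 0 < α) (hγ : 0 ≤ γ) (hβγ : β < γ)
    (hε1 : 0 < ε) (hε2 : ε < γ - β) (hε3 : γ - β < α) :
    ∃ C > (0:ℝ), ∀ ξ : ℝ, 0 < ξ →
      (∑' k : Fin d → ℕ,
        if ξ < (α - ε) * (∑ i, (k i : ℝ)) - (γ - β - ε) * ((Finset.univ.sup k : ℕ) : ℝ)
        then (2:ℝ) ^ (-(2*α) * (∑ i, (k i : ℝ))
              + 2 * (γ - β) * ((Finset.univ.sup k : ℕ) : ℝ))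
        else 0)
        ≤ C * (2:ℝ) ^ (-(2 * ξ)) := by
  set a : ℝ := α - ε with ha_def
  set b : ℝ := γ - β - ε with hb_def
  set c : ℝ := α - (γ - β) with hc_def
  have ha : 0 < a := by rw [ha_def]; linarith
  have hb : 0 < b := by rw [hb_def]; linarith
  have hc : 0 < c := by rw [hc_def]; linarith
  set ρe : ℝ≥0∞ := ENNReal.ofReal ((2:ℝ) ^ (-(2*ε))) with hρe
  set ρc : ℝ≥0∞ := ENNReal.ofReal ((2:ℝ) ^ (-2 * c)) with hρc
  set S : ℝ≥0∞ := ∑' n : ℕ, ρe ^ n with hSdef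
  set G : ℝ≥0∞ := ∑' n : ℕ, ρc ^ n with hGdef
  have hS : S ≠ ⊤ := geom_ne_top (by linarith)
  have hG : G ≠ ⊤ := geom_ne_top (by linarith)
  set K : ℝ≥0∞ := (d : ℝ≥0∞) * (S ^ d * G) with hKdef
  have hK : K ≠ ⊤ :=
    ENNReal.mul_ne_top (ENNReal.natCast_ne_top d)
      (ENNReal.mul_ne_top (ENNReal.pow_ne_top hS) hG)
  have hC : (0:ℝ) < K.toReal + 1 := by
    have := ENNReal.toReal_nonneg (a := K); linarith
  refine ⟨K.toReal + 1, hC, ?_⟩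
  intro ξ hξ
  have hB : (0:ℝ) ≤ (K.toReal + 1) * (2:ℝ) ^ (-(2 * ξ)) := by positivity
  refine real_of_ennreal ?_ hB ?_
  · intro k
    split
    · positivity
    · exact le_rfl
  -- ENNReal goal
  rcases Nat.eq_zero_or_pos d with hd | hd
  · subst hd
    have hz : ∀ k : Fin 0 → ℕ,
        ENNReal.ofReal (if ξ < a * (∑ i, (k i : ℝ)) - b * ((Finset.univ.sup k : ℕ) : ℝ)
          then (2:ℝ) ^ (-(2*α) * (∑ i, (k i : ℝ)) + 2 * (γ - β) * ((Finset.univ.sup k : ℕ) : ℝ))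
          else 0) = 0 := by
      intro k
      rw [if_neg, ENNReal.ofReal_zero]
      simp only [Finset.univ_eq_empty, Finset.sum_empty, Finset.sup_empty]
      intro hcon
      simp only [Nat.bot_eq_zero, Nat.cast_zero, mul_zero, sub_zero] at hcon
      linarith
    rw [tsum_congr hz, tsum_zero]
    exact zero_le
  haveI : Nonempty (Fin d) := Fin.pos_iff_nonempty.mp hd
  set A : ℝ≥0∞ := ENNReal.ofReal ((2:ℝ) ^ (-(2 * ξ))) with hA
  set Φ : (Fin d → ℕ) → ℝ≥0∞ := fun k =>
    ENNReal.ofReal (if ξ < a * (∑ i, (k i : ℝ)) - b * ((Finset.univ.sup k : ℕ) : ℝ)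
      then (2:ℝ) ^ (-(2*α) * (∑ i, (k i : ℝ)) + 2 * (γ - β) * ((Finset.univ.sup k : ℕ) : ℝ))
      else 0) with hΦ
  have step_A : ∀ k : Fin d → ℕ,
      Φ k ≤ ∑ i : Fin d, (if k i = Finset.univ.sup k then Φ k else 0) := by
    intro k
    obtain ⟨i, -, hi⟩ := Finset.exists_mem_eq_sup (Finset.univ : Finset (Fin d))
      Finset.univ_nonempty k
    have h0 : (if k i = Finset.univ.sup k then Φ k else (0:ℝ≥0∞)) = Φ k := if_pos hi.symm
    exact le_trans h0.symm.le
      (Finset.single_le_sum (f := fun j => if k j = Finset.univ.sup k then Φ k else (0:ℝ≥0∞))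
        (fun j _ => zero_le) (Finset.mem_univ i))
  have step_B : ∀ i : Fin d,
      (∑' k : Fin d → ℕ, (if k i = Finset.univ.sup k then Φ k else 0)) ≤ A * (G * S ^ d) := by
    intro i
    set h : ℕ × ({j : Fin d // j ≠ i} → ℕ) → ℝ≥0∞ := fun p =>
      A * ρe ^ (∑ j, p.2 j) *
        (if ξ - a * ((∑ j, p.2 j : ℕ) : ℝ) < c * ((p.1 : ℕ) : ℝ) then
          ENNReal.ofReal ((2:ℝ) ^ (-2 * (c * ((p.1 : ℕ) : ℝ) - (ξ - a * ((∑ j, p.2 j : ℕ) : ℝ)))))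
        else 0) with hh
    set E := Equiv.funSplitAt i ℕ with hE
    have point : ∀ k : Fin d → ℕ,
        (if k i = Finset.univ.sup k then Φ k else 0) ≤ h (E k) := by
      intro k
      show (if k i = Finset.univ.sup k then Φ k else 0) ≤
        A * ρe ^ (∑ j : {j : Fin d // j ≠ i}, k j) *
          (if ξ - a * ((∑ j : {j : Fin d // j ≠ i}, k j : ℕ) : ℝ) < c * ((k i : ℕ) : ℝ) then
            ENNReal.ofReal ((2:ℝ) ^ (-2 * (c * ((k i : ℕ) : ℝ) -
              (ξ - a * ((∑ j : {j : Fin d // j ≠ i}, k j : ℕ) : ℝ)))))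
          else 0)
      by_cases hsup : k i = Finset.univ.sup k
      · rw [if_pos hsup]
        set m : ℕ := k i with hm
        set r : ℕ := ∑ j : {j : Fin d // j ≠ i}, k j with hr
        have hsum : (∑ j : Fin d, k j) = m + r := by
          rw [← Finset.add_sum_erase Finset.univ k (Finset.mem_univ i)]
          congr 1
          refine Finset.sum_subtype _ ?_ k
          intro x
          simp [Finset.mem_erase]
        have hcast : (∑ j, ((k j : ℕ) : ℝ)) = (m:ℝ) + (r:ℝ) := by
          rw [← Nat.cast_sum]
          exact_mod_cast congrArg (Nat.cast : ℕ → ℝ) hsum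
        have hlin : a * ((m:ℝ) + (r:ℝ)) - b * (m:ℝ) = c * (m:ℝ) + a * (r:ℝ) := by
          rw [ha_def, hb_def, hc_def]; ring
        have hcond : (ξ < a * (∑ j, ((k j : ℕ) : ℝ)) - b * ((Finset.univ.sup k : ℕ) : ℝ))
            ↔ (ξ - a * (r:ℝ) < c * (m:ℝ)) := by
          rw [← hsup, hcast, hlin]
          constructor <;> intro <;> linarith
        rw [hΦ]
        dsimp only
        by_cases hcnd : ξ - a * (r:ℝ) < c * (m:ℝ)
        · rw [if_pos (hcond.mpr hcnd), if_pos hcnd]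
          have hexp : -(2*α) * (∑ j, ((k j : ℕ) : ℝ))
                + 2 * (γ - β) * ((Finset.univ.sup k : ℕ) : ℝ)
              = (-(2 * ξ)) + ((-(2*ε)) * (r:ℝ) + (-2 * (c * (m:ℝ) - (ξ - a * (r:ℝ))))) := by
            rw [← hsup, hcast, ha_def, hc_def]; ring
          rw [hexp, Real.rpow_add two_pos, Real.rpow_add two_pos,
            ENNReal.ofReal_mul (Real.rpow_nonneg (by norm_num) _),
            ENNReal.ofReal_mul (Real.rpow_nonneg (by norm_num) _),
            ofReal_rpow_natmul]
          rw [hA, hρe]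
          exact le_of_eq (by ring)
        · rw [if_neg (fun hcc => hcnd (hcond.mp hcc)), if_neg hcnd]
          simp
      · rw [if_neg hsup]
        exact zero_le
    calc (∑' k : Fin d → ℕ, (if k i = Finset.univ.sup k then Φ k else 0))
        ≤ ∑' k : Fin d → ℕ, h (E k) := ENNReal.tsum_le_tsum point
      _ = ∑' p, h p := E.tsum_eq h
      _ = ∑' q : {j : Fin d // j ≠ i} → ℕ, ∑' m : ℕ, h (m, q) := by
          rw [ENNReal.tsum_prod']; exact ENNReal.tsum_comm
      _ ≤ ∑' q : {j : Fin d // j ≠ i} → ℕ, A * ρe ^ (∑ j, q j) * G := by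
          refine ENNReal.tsum_le_tsum fun q => ?_
          rw [hh]
          dsimp only
          rw [ENNReal.tsum_mul_left]
          exact mul_le_mul_right (tail_le hc _) _
      _ = A * G * ∑' q : {j : Fin d // j ≠ i} → ℕ, ρe ^ (∑ j, q j) := by
          rw [tsum_congr (fun q => by ring :
            ∀ q : {j : Fin d // j ≠ i} → ℕ,
              A * ρe ^ (∑ j, q j) * G = (A * G) * ρe ^ (∑ j, q j)),
            ENNReal.tsum_mul_left]
      _ = A * G * S ^ (Fintype.card {j : Fin d // j ≠ i}) := by
          rw [tsum_pi_pow, hSdef]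
      _ ≤ A * G * S ^ d := by
          refine mul_le_mul_right (pow_le_pow_right' one_le_geom ?_) _
          exact le_trans (Fintype.card_subtype_le _) (le_of_eq (Fintype.card_fin d))
      _ = A * (G * S ^ d) := mul_assoc _ _ _
  calc (∑' k : Fin d → ℕ, Φ k)
      ≤ ∑' k : Fin d → ℕ, ∑ i : Fin d, (if k i = Finset.univ.sup k then Φ k else 0) :=
        ENNReal.tsum_le_tsum step_A
    _ = ∑ i : Fin d, ∑' k : Fin d → ℕ, (if k i = Finset.univ.sup k then Φ k else 0) :=
        Summable.tsum_finsetSum (fun _ _ => ENNReal.summable)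
    _ ≤ ∑ i : Fin d, A * (G * S ^ d) := Finset.sum_le_sum (fun i _ => step_B i)
    _ = (d : ℝ≥0∞) * (A * (G * S ^ d)) := by
        rw [Finset.sum_const, Finset.card_univ, Fintype.card_fin, nsmul_eq_mul]
    _ = K * A := by rw [hKdef]; ring
    _ ≤ ENNReal.ofReal (K.toReal + 1) * A := by
        refine mul_le_mul_left ?_ A
        calc K = ENNReal.ofReal K.toReal := (ENNReal.ofReal_toReal hK).symm
          _ ≤ ENNReal.ofReal (K.toReal + 1) := ENNReal.ofReal_le_ofReal (by linarith)
    _ = ENNReal.ofReal ((K.toReal + 1) * (2:ℝ) ^ (-(2 * ξ))) := by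
        rw [ENNReal.ofReal_mul (by linarith), hA]
end

section
/- Let α ≥ 0 and β ∈ ℝ with α + β ≥ 0, and min(α+β, α+β/d) > 1/2. Then the hybrid Sobolev space H^{α,β}(𝕋^d) embeds continuously into C(𝕋^d); more precisely, for every f ∈ H^{α,β}(𝕋^d) the Littlewood–Paley series Σ_{k∈ℕ₀^d} δ_k(f) converges absolutely in the uniform norm and Σ_{k∈ℕ₀^d} ‖δ_k(f)‖_∞ ≤ C ‖f‖_{H^{α,β}} for a constant C = C(α,β,d). -/
open Finset
open scoped Classical

/-- membership of an integer frequency `n` in the dyadic block `P_j`: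
`P_0 = {0}`, `P_j = {n : 2^{j-1} ≤ |n| < 2^j}` for `j ≥ 1`. -/
def blockMem (j : ℕ) (n : ℤ) : Prop :=
  if j = 0 then n = 0 else (2:ℤ) ^ (j - 1) ≤ |n| ∧ |n| < 2 ^ j

/-- `‖δ_k(f)‖₂²` computed via Parseval from the Fourier coefficients `c`. -/
noncomputable def blockNormSq {d : ℕ} (c : (Fin d → ℤ) → ℂ) (k : Fin d → ℕ) : ℝ :=
  ∑' m : Fin d → ℤ, if (∀ i, blockMem (k i) (m i)) then ‖c m‖ ^ 2 else 0

/-- the Littlewood–Paley piece `δ_k(f)` as a trigonometric polynomial, from the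
Fourier coefficients `c` of `f`. -/
noncomputable def deltaFun {d : ℕ} (c : (Fin d → ℤ) → ℂ) (k : Fin d → ℕ)
    (x : Fin d → ℝ) : ℂ :=
  ∑' m : Fin d → ℤ,
    if (∀ i, blockMem (k i) (m i))
    then c m * Complex.exp (Complex.I * ∑ i, (m i : ℂ) * (x i : ℂ)) else 0

lemma delta_sup_le {d : ℕ} (c : (Fin d → ℤ) → ℂ) (k : Fin d → ℕ) :
    (⨆ x : Fin d → ℝ, ‖deltaFun c k x‖)
      ≤ Real.sqrt ((2:ℝ) ^ (∑ i, k i + d)) * Real.sqrt (blockNormSq c k) := by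
  set S : Finset (Fin d → ℤ) :=
    Fintype.piFinset fun i => Finset.Ioo (-(2:ℤ)^(k i)) ((2:ℤ)^(k i)) with hS
  have hsupp : ∀ m : Fin d → ℤ, (∀ i, blockMem (k i) (m i)) → m ∈ S := by
    intro m hm
    rw [hS, Fintype.mem_piFinset]
    intro i
    have h := hm i
    unfold blockMem at h
    rw [Finset.mem_Ioo]
    split_ifs at h with h0
    · rw [h]
      constructor <;> simp [neg_neg] <;> positivity
    · have := abs_lt.mp h.2
      exact this
  set g : (Fin d → ℤ) → ℝ := fun m => if (∀ i, blockMem (k i) (m i)) then ‖c m‖ else 0 with hg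
  have hQ : blockNormSq c k = ∑ m ∈ S, (g m) ^ 2 := by
    rw [blockNormSq, tsum_eq_sum (s := S) (fun m hm => by
      rw [if_neg]; intro h; exact hm (hsupp m h))]
    refine Finset.sum_congr rfl fun m _ => ?_
    by_cases h : ∀ i, blockMem (k i) (m i) <;> simp [hg, h]
  have hbound : ∀ x : Fin d → ℝ, ‖deltaFun c k x‖ ≤ ∑ m ∈ S, g m := by
    intro x
    rw [deltaFun, tsum_eq_sum (s := S) (fun m hm => by
      rw [if_neg]; intro h; exact hm (hsupp m h))]
    refine (norm_sum_le _ _).trans (Finset.sum_le_sum fun m _ => ?_)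
    rw [hg]
    split_ifs with h
    · have hcast : (∑ i, (m i:ℂ) * (x i:ℂ)) = ((∑ i, (m i:ℝ) * x i : ℝ) : ℂ) := by
        push_cast; ring
      rw [norm_mul, hcast, mul_comm Complex.I]
      have : ‖Complex.exp (((∑ i, (m i:ℝ) * x i : ℝ) : ℂ) * Complex.I)‖ = 1 := by
        rw [Complex.norm_exp_ofReal_mul_I]
      rw [this, mul_one]
      simp [hg, h]
    · simp [hg]
      positivity
  have hcard : (S.card : ℝ) ≤ (2:ℝ) ^ (∑ i, k i + d) := by
    have h1 : S.card ≤ 2 ^ (∑ i, k i + d) := by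
      rw [hS, Fintype.card_piFinset]
      calc ∏ i, (Finset.Ioo (-(2:ℤ)^(k i)) ((2:ℤ)^(k i))).card
          ≤ ∏ i : Fin d, 2 ^ (k i + 1) := by
            refine Finset.prod_le_prod' fun i _ => ?_
            rw [Int.card_Ioo]
            rw [Int.toNat_le]
            push_cast
            rw [pow_succ]
            ring_nf
            nlinarith [pow_pos (by norm_num : (0:ℤ) < 2) (k i)]
        _ = 2 ^ (∑ i, (k i + 1)) := Finset.prod_pow_eq_pow_sum _ _ _
        _ = 2 ^ (∑ i, k i + d) := by rw [Finset.sum_add_distrib]; simp [Finset.card_univ]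
    calc (S.card : ℝ) ≤ ((2 ^ (∑ i, k i + d) : ℕ) : ℝ) := Nat.cast_le.mpr h1
      _ = (2:ℝ) ^ (∑ i, k i + d) := by push_cast; ring
  have hgsum : ∑ m ∈ S, g m ≤ Real.sqrt ((2:ℝ) ^ (∑ i, k i + d)) * Real.sqrt (blockNormSq c k) := by
    have h2 : (∑ m ∈ S, g m) ^ 2 ≤ (S.card : ℝ) * ∑ m ∈ S, g m ^ 2 :=
      sq_sum_le_card_mul_sum_sq (s := S) (f := g)
    have hg0 : 0 ≤ ∑ m ∈ S, g m :=
      Finset.sum_nonneg fun m _ => by rw [hg]; positivity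
    calc ∑ m ∈ S, g m = Real.sqrt ((∑ m ∈ S, g m) ^ 2) := (Real.sqrt_sq hg0).symm
      _ ≤ Real.sqrt ((2:ℝ) ^ (∑ i, k i + d) * ∑ m ∈ S, g m ^ 2) := by
          refine Real.sqrt_le_sqrt (h2.trans ?_)
          refine mul_le_mul_of_nonneg_right hcard ?_
          exact Finset.sum_nonneg fun m _ => sq_nonneg _
      _ = _ := by rw [Real.sqrt_mul (by positivity), hQ]
  exact ciSup_le fun x => (hbound x).trans hgsum


lemma summable_geom_pi (d : ℕ) {r : ℝ} (h0 : 0 ≤ r) (h1 : r < 1) :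
    Summable (fun k : Fin d → ℕ => ∏ i, r ^ (k i)) := by
  induction d with
  | zero => exact summable_of_finite_support (Set.toFinite _)
  | succ n ih =>
    have h := (summable_geometric_of_lt_one h0 h1).mul_of_nonneg ih
      (fun m => pow_nonneg h0 _) (fun v => prod_nonneg fun i _ => pow_nonneg h0 _)
    have h2 := (Fin.consEquiv fun _ : Fin (n+1) => ℕ).symm.summable_iff.mpr h
    refine h2.congr fun k => ?_
    simp [Fin.consEquiv, Fin.prod_univ_succ, Fin.tail]

lemma tsum_cs {ι : Type*} {a b : ι → ℝ} (ha : ∀ k, 0 ≤ a k) (hb : ∀ k, 0 ≤ b k)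
    (hsa : Summable (fun k => a k ^ 2)) (hsb : Summable (fun k => b k ^ 2)) :
    Summable (fun k => a k * b k) ∧
      ∑' k, a k * b k ≤ Real.sqrt (∑' k, a k ^ 2) * Real.sqrt (∑' k, b k ^ 2) := by
  have hsum : Summable (fun k => a k * b k) := by
    refine Summable.of_nonneg_of_le (fun k => mul_nonneg (ha k) (hb k))
      (fun k => ?_) ((hsa.add hsb).div_const 2)
    nlinarith [sq_nonneg (a k - b k)]
  refine ⟨hsum, hsum.tsum_le_of_sum_le fun s => ?_⟩
  calc ∑ k ∈ s, a k * b k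
      ≤ Real.sqrt (∑ k ∈ s, a k ^ 2) * Real.sqrt (∑ k ∈ s, b k ^ 2) :=
        Real.sum_mul_le_sqrt_mul_sqrt s a b
    _ ≤ _ := mul_le_mul (Real.sqrt_le_sqrt (hsa.sum_le_tsum s (fun k _ => sq_nonneg _)))
        (Real.sqrt_le_sqrt (hsb.sum_le_tsum s (fun k _ => sq_nonneg _)))
        (Real.sqrt_nonneg _) (Real.sqrt_nonneg _)


/-- `H^{α,β}(𝕋^d) ↪ C(𝕋^d)`: the Littlewood–Paley series converges
absolutely in the uniform norm with `∑_k ‖δ_k(f)‖_∞ ≤ C ‖f‖_{H^{α,β}}`. -/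
theorem stmt6 (d : ℕ) (hd : 0 < d) (α β : ℝ) (hα : 0 ≤ α) (hab : 0 ≤ α + β)
    (hmin : 1/2 < min (α + β) (α + β / d)) :
    ∃ C > (0:ℝ), ∀ c : (Fin d → ℤ) → ℂ,
      Summable (fun k : Fin d → ℕ =>
        (2:ℝ) ^ (2 * (α * (∑ i, (k i : ℝ)) + β * ((Finset.univ.sup k : ℕ) : ℝ)))
          * blockNormSq c k) →
      Summable (fun k : Fin d → ℕ => ⨆ x : Fin d → ℝ, ‖deltaFun c k x‖) ∧
      (∑' k : Fin d → ℕ, ⨆ x : Fin d → ℝ, ‖deltaFun c k x‖)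
        ≤ C * Real.sqrt (∑' k : Fin d → ℕ,
            (2:ℝ) ^ (2 * (α * (∑ i, (k i : ℝ)) + β * ((Finset.univ.sup k : ℕ) : ℝ)))
              * blockNormSq c k) := by
  set μ := min (α + β) (α + β / d) with hμdef
  have hμ : 1/2 < μ := hmin
  set r : ℝ := (2:ℝ) ^ (1 - 2*μ) with hrdef
  have hr0 : 0 ≤ r := Real.rpow_nonneg (by norm_num) _
  have hr1 : r < 1 := Real.rpow_lt_one_of_one_lt_of_neg (by norm_num) (by linarith)
  set E : (Fin d → ℕ) → ℝ :=
    fun k => α * (∑ i, (k i : ℝ)) + β * ((Finset.univ.sup k : ℕ) : ℝ) with hE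
  -- pointwise lower bound for the exponent
  have hEk : ∀ k : Fin d → ℕ, μ * (∑ i, (k i : ℝ)) ≤ E k := by
    intro k
    have hs0 : (0:ℝ) ≤ ∑ i, (k i : ℝ) := Finset.sum_nonneg fun i _ => Nat.cast_nonneg _
    have hsup_le : ((Finset.univ.sup k : ℕ) : ℝ) ≤ ∑ i, (k i : ℝ) := by
      have h1 : Finset.univ.sup k ≤ ∑ i, k i :=
        Finset.sup_le fun i _ => Finset.single_le_sum (fun j _ => Nat.zero_le _) (mem_univ i)
      calc ((Finset.univ.sup k : ℕ) : ℝ) ≤ ((∑ i, k i : ℕ) : ℝ) := Nat.cast_le.mpr h1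
        _ = ∑ i, (k i : ℝ) := by push_cast; ring
    have hle_sup : ∑ i, (k i : ℝ) ≤ (d : ℝ) * ((Finset.univ.sup k : ℕ) : ℝ) := by
      have h1 : ∑ i, k i ≤ d * Finset.univ.sup k := by
        calc ∑ i, k i ≤ Finset.univ.card • Finset.univ.sup k :=
              Finset.sum_le_card_nsmul _ _ _ fun i _ => Finset.le_sup (mem_univ i)
          _ = d * Finset.univ.sup k := by simp [Finset.card_univ, smul_eq_mul]
      calc ∑ i, (k i : ℝ) = ((∑ i, k i : ℕ) : ℝ) := by push_cast; ring
        _ ≤ ((d * Finset.univ.sup k : ℕ) : ℝ) := Nat.cast_le.mpr h1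
        _ = (d : ℝ) * _ := by push_cast; ring
    rcases le_or_gt 0 β with hβ | hβ
    · have h1 : μ ≤ α + β / d := min_le_right _ _
      have hd' : (0:ℝ) < d := by exact_mod_cast hd
      have h2 : (∑ i, (k i : ℝ)) / d ≤ ((Finset.univ.sup k : ℕ) : ℝ) := by
        rw [div_le_iff₀ hd']
        linarith [hle_sup]
      calc μ * (∑ i, (k i : ℝ)) ≤ (α + β / d) * (∑ i, (k i : ℝ)) :=
            mul_le_mul_of_nonneg_right h1 hs0
        _ = α * (∑ i, (k i : ℝ)) + β * ((∑ i, (k i : ℝ)) / d) := by ring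
        _ ≤ E k := by
            simp only [hE]
            have := mul_le_mul_of_nonneg_left h2 hβ
            linarith
    · have h1 : μ ≤ α + β := min_le_left _ _
      calc μ * (∑ i, (k i : ℝ)) ≤ (α + β) * (∑ i, (k i : ℝ)) :=
            mul_le_mul_of_nonneg_right h1 hs0
        _ = α * (∑ i, (k i : ℝ)) + β * (∑ i, (k i : ℝ)) := by ring
        _ ≤ E k := by
            simp only [hE]
            have := mul_le_mul_of_nonpos_left hsup_le hβ.le
            linarith
  set a : (Fin d → ℕ) → ℝ :=
    fun k => (2:ℝ) ^ (((∑ i, (k i : ℝ)) + d) / 2 - E k) with ha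
  have ha0 : ∀ k, 0 ≤ a k := fun k => Real.rpow_nonneg (by norm_num) _
  have hsa : Summable (fun k => a k ^ 2) := by
    refine Summable.of_nonneg_of_le (fun k => sq_nonneg _) (fun k => ?_)
      (((summable_geom_pi d hr0 hr1)).mul_left ((2:ℝ) ^ (d:ℝ)))
    have h1 : a k ^ 2 = (2:ℝ) ^ ((∑ i, (k i : ℝ)) + d - 2 * E k) := by
      simp only [ha]
      rw [pow_two, ← Real.rpow_add (by norm_num : (0:ℝ) < 2)]
      congr 1
      ring
    rw [h1]
    have h2 : (∑ i, (k i : ℝ)) + d - 2 * E k ≤ (d:ℝ) + (1 - 2*μ) * (∑ i, (k i : ℝ)) := by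
      have := hEk k
      linarith
    calc (2:ℝ) ^ ((∑ i, (k i : ℝ)) + d - 2 * E k)
        ≤ (2:ℝ) ^ ((d:ℝ) + (1 - 2*μ) * (∑ i, (k i : ℝ))) :=
          Real.rpow_le_rpow_of_exponent_le (by norm_num) h2
      _ = (2:ℝ) ^ (d:ℝ) * ∏ i, r ^ (k i) := by
          rw [Real.rpow_add (by norm_num : (0:ℝ) < 2)]
          congr 1
          have hn : (∑ i, (k i : ℝ)) = ((∑ i, k i : ℕ) : ℝ) := by push_cast; ring
          rw [hn, Real.rpow_mul (by norm_num : (0:ℝ) ≤ 2), Real.rpow_natCast,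
            Finset.prod_pow_eq_pow_sum]
      _ = _ := rfl
  refine ⟨Real.sqrt (∑' k, a k ^ 2) + 1, by positivity, fun c hgiven => ?_⟩
  have hQ0 : ∀ k, (0:ℝ) ≤ blockNormSq c k :=
    fun k => tsum_nonneg fun m => by positivity
  set b : (Fin d → ℕ) → ℝ :=
    fun k => (2:ℝ) ^ (E k) * Real.sqrt (blockNormSq c k) with hb
  have hb0 : ∀ k, 0 ≤ b k :=
    fun k => mul_nonneg (Real.rpow_nonneg (by norm_num) _) (Real.sqrt_nonneg _)
  have hb2 : ∀ k, b k ^ 2 =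
      (2:ℝ) ^ (2 * (α * (∑ i, (k i : ℝ)) + β * ((Finset.univ.sup k : ℕ) : ℝ)))
        * blockNormSq c k := by
    intro k
    simp only [hb]
    rw [mul_pow, Real.sq_sqrt (hQ0 k), pow_two, ← Real.rpow_add (by norm_num : (0:ℝ) < 2)]
    congr 2
    simp only [hE]
    ring
  have hsb : Summable (fun k => b k ^ 2) := by
    refine hgiven.congr fun k => ?_
    rw [hb2 k]
  have key : ∀ k, (⨆ x : Fin d → ℝ, ‖deltaFun c k x‖) ≤ a k * b k := by
    intro k
    refine (delta_sup_le c k).trans ?_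
    have hab' : a k * b k
        = (2:ℝ) ^ ((((∑ i, (k i : ℝ)) + d)) / 2) * Real.sqrt (blockNormSq c k) := by
      simp only [ha, hb]
      rw [← mul_assoc, ← Real.rpow_add (by norm_num : (0:ℝ) < 2)]
      congr 2
      ring
    rw [hab']
    refine mul_le_mul_of_nonneg_right ?_ (Real.sqrt_nonneg _)
    have h1 : ((2:ℝ) ^ (∑ i, k i + d) : ℝ) = (2:ℝ) ^ ((∑ i, (k i : ℝ)) + d) := by
      rw [← Real.rpow_natCast 2 (∑ i, k i + d)]
      congr 1
      push_cast
      ring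
    rw [h1, Real.sqrt_eq_rpow, ← Real.rpow_mul (by norm_num : (0:ℝ) ≤ 2)]
    apply le_of_eq
    congr 1
    ring
  have hsup0 : ∀ k, (0:ℝ) ≤ ⨆ x : Fin d → ℝ, ‖deltaFun c k x‖ :=
    fun k => Real.iSup_nonneg fun x => norm_nonneg _
  obtain ⟨hsab, hcs⟩ := tsum_cs ha0 hb0 hsa hsb
  have hsum : Summable (fun k : Fin d → ℕ => ⨆ x : Fin d → ℝ, ‖deltaFun c k x‖) :=
    Summable.of_nonneg_of_le hsup0 key hsab
  refine ⟨hsum, ?_⟩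
  have hBeq : (∑' k, b k ^ 2) = ∑' k : Fin d → ℕ,
      (2:ℝ) ^ (2 * (α * (∑ i, (k i : ℝ)) + β * ((Finset.univ.sup k : ℕ) : ℝ)))
        * blockNormSq c k := tsum_congr hb2
  calc (∑' k : Fin d → ℕ, ⨆ x : Fin d → ℝ, ‖deltaFun c k x‖)
      ≤ ∑' k, a k * b k := hsum.tsum_le_tsum key hsab
    _ ≤ Real.sqrt (∑' k, a k ^ 2) * Real.sqrt (∑' k, b k ^ 2) := hcs
    _ ≤ _ := by
        rw [hBeq]
        refine mul_le_mul_of_nonneg_right ?_ (Real.sqrt_nonneg _)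
        linarith [Real.sqrt_nonneg (∑' k, a k ^ 2)]
end

section
/- Let X be a Banach space, L an (n+1)-dimensional subspace of X, and r > 0. Then for every continuous linear operator A : X → X of rank at most n, there exists f ∈ L with ‖f‖ ≤ r and ‖f − Af‖ ≥ r. Consequently, the linear n-width of the ball B = {f ∈ L : ‖f‖ ≤ r} in X is at least r. -/
/-- Tikhomirov's lower bound: if `L` is an `(n+1)`-dimensional
subspace of a Banach space `X` and `r > 0`, then for every continuous linear
operator `A : X →L[ℝ] X` of rank at most `n` there is `f ∈ L` with `‖f‖ ≤ r` and
`‖f - A f‖ ≥ r`; hence the linear `n`-width of the ball of radius `r` in `L`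
is at least `r`. -/
theorem stmt11 (X : Type*) [NormedAddCommGroup X] [NormedSpace ℝ X] [CompleteSpace X]
    (n : ℕ) (L : Submodule ℝ X) (hL : Module.finrank ℝ L = n + 1)
    (r : ℝ) (hr : 0 < r) :
    ∀ A : X →L[ℝ] X, Module.rank ℝ (LinearMap.range (A : X →ₗ[ℝ] X)) ≤ (n : Cardinal) →
      ∃ f ∈ L, ‖f‖ ≤ r ∧ r ≤ ‖f - A f‖ := by
  intro A hA
  -- restriction of A to L
  set T : L →ₗ[ℝ] X := (A : X →ₗ[ℝ] X).comp L.subtype with hT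
  have hrankT : LinearMap.rank T ≤ (n : Cardinal) := by
    refine le_trans ?_ hA
    exact Submodule.rank_mono (LinearMap.range_comp_le_range _ _)
  -- T is not injective
  have hfin : Module.Finite ℝ L := Module.finite_of_finrank_pos (by omega)
  have hnotinj : ¬ Function.Injective T := by
    intro hinj
    have heq : Module.rank ℝ L = Module.rank ℝ (LinearMap.range T) :=
      (LinearEquiv.ofInjective T hinj).rank_eq
    have hrkL : Module.rank ℝ L = ((n + 1 : ℕ) : Cardinal) := by
      rw [← hL, Module.finrank_eq_rank]
    have : ((n + 1 : ℕ) : Cardinal) ≤ (n : Cardinal) :=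
      hrkL ▸ heq.symm ▸ hrankT
    exact absurd this (by exact_mod_cast Nat.not_succ_le_self n)
  rw [injective_iff_map_eq_zero] at hnotinj
  push_neg at hnotinj
  obtain ⟨x, hx0, hxne⟩ := hnotinj
  have hxne' : (x : X) ≠ 0 := fun h => hxne (Subtype.ext h)
  have hnx : 0 < ‖(x : X)‖ := norm_pos_iff.mpr hxne'
  refine ⟨(r / ‖(x : X)‖) • (x : X), L.smul_mem _ x.2, ?_, ?_⟩
  · rw [norm_smul]
    rw [Real.norm_eq_abs, abs_of_pos (div_pos hr hnx)]
    rw [div_mul_cancel₀ _ (ne_of_gt hnx)]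
  · have hAx : A (x : X) = 0 := hx0
    have : A ((r / ‖(x : X)‖) • (x : X)) = 0 := by
      rw [map_smul, hAx, smul_zero]
    rw [this, sub_zero, norm_smul, Real.norm_eq_abs, abs_of_pos (div_pos hr hnx),
      div_mul_cancel₀ _ (ne_of_gt hnx)]
end
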